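/- Let p = (t_0, z_0) ∈ S be a non-wandering point of F, and let θ(p) = (t_0, t_1, t_2, …) be its itinerary sequence. Then t_i ∈ NW(g) for all i ≥ 0. -/

import Mathlib

/-- A point `x` is non-wandering for `h` if for every neighborhood `U` of `x`
there is `n ≥ 1` with `h^n(U) ∩ U ≠ ∅`. -/
def NonWandering {X : Type*} [TopologicalSpace X] (h : X → X) (x : X) : Prop :=
  ∀ U ∈ nhds x, ∃ n ≥ 1, (h^[n] '' U ∩ U).Nonempty

/-- A non-wandering point returns at arbitrarily large times. -/
lemma nonWandering_large_times {X : Type*} [MetricSpace X] (F : X → X)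
    (hFc : Continuous F) (p : X) (hp : NonWandering F p) :
    ∀ W ∈ nhds p, ∀ m : ℕ, ∃ n ≥ m, ∃ q ∈ W, F^[n] q ∈ W := by
  by_cases hper : ∃ d ≥ 1, F^[d] p = p
  · obtain ⟨d, hd1, hdp⟩ := hper
    intro W hW m
    refine ⟨d * (m + 1), ?_, p, mem_of_mem_nhds hW, ?_⟩
    · calc m ≤ m + 1 := Nat.le_succ m
        _ = 1 * (m + 1) := (one_mul _).symm
        _ ≤ d * (m + 1) := Nat.mul_le_mul_right _ hd1
    · rw [Function.iterate_mul]
      exact (Function.iterate_fixed hdp _).symm ▸ mem_of_mem_nhds hW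
  · push_neg at hper
    have hex : ∀ d : ℕ, F^[d] p ≠ p →
        ∃ δ > 0, ∀ q, dist q p < δ → ¬ dist (F^[d] q) p < δ := by
      intro d hd
      have hr : 0 < dist (F^[d] p) p := dist_pos.2 hd
      set r := dist (F^[d] p) p with hrdef
      obtain ⟨δ, hδ0, hδ⟩ := Metric.continuousAt_iff.1 ((hFc.iterate d).continuousAt (x := p))
        (r / 3) (by linarith)
      refine ⟨min δ (r / 3), lt_min hδ0 (by linarith), fun q hq hcon => ?_⟩
      have h1 : dist (F^[d] q) (F^[d] p) < r / 3 := hδ (lt_of_lt_of_le hq (min_le_left _ _))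
      have h2 : dist (F^[d] q) p < r / 3 := lt_of_lt_of_le hcon (min_le_right _ _)
      have := dist_triangle (F^[d] p) (F^[d] q) p
      rw [dist_comm (F^[d] p) (F^[d] q)] at this
      rw [← hrdef] at this
      linarith
    have Q : ∀ m : ℕ, ∀ W ∈ nhds p, ∃ n ≥ m + 1, ∃ q ∈ W, F^[n] q ∈ W := by
      intro m
      induction m with
      | zero =>
        intro W hW
        obtain ⟨n, hn1, y, ⟨q, hqW, hq⟩, hyW⟩ := hp W hW
        exact ⟨n, hn1, q, hqW, hq ▸ hyW⟩
      | succ m ih =>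
        intro W hW
        obtain ⟨δ, hδ0, hδ⟩ := hex (m + 1) (hper (m + 1) (Nat.succ_le_succ (Nat.zero_le m)))
        obtain ⟨n, hn, q, hqW, hqn⟩ :=
          ih (W ∩ Metric.ball p δ) (Filter.inter_mem hW (Metric.ball_mem_nhds p hδ0))
        have hne : n ≠ m + 1 := by
          intro h
          exact hδ q (Metric.mem_ball.1 hqW.2) (h ▸ Metric.mem_ball.1 hqn.2)
        exact ⟨n, lt_of_le_of_ne hn (Ne.symm hne), q, hqW.1, hqn.1⟩
    intro W hW m
    obtain ⟨n, hn, q, hq, hqn⟩ := Q m W hW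
    exact ⟨n, le_trans (Nat.le_succ m) hn, q, hq, hqn⟩

/-- if p = (t_0, z_0) ∈ S is a non-wandering point of F with
itinerary sequence θ(p) = (t_0, t_1, …), then t_i ∈ NW(g) for all i. -/
theorem stmt7 {T N : Type*} [MetricSpace T] [CompactSpace T] [Nonempty T]
    [MetricSpace N] [CompactSpace N] [Nonempty N]
    (g : T → T) (hgc : Continuous g) (hgs : Function.Surjective g)
    (hgcov : IsCoveringMap g)
    (F : T × N → T × N) (hFc : Continuous F) (hFi : Function.Injective F)
    (hfib : ∀ p : T × N, (F p).1 = g p.1)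
    (C lam : ℝ) (hC : 0 < C) (hlam0 : 0 < lam) (hlam1 : lam < 1)
    (hcontr : ∀ (t : T) (n : ℕ),
      Metric.diam (F^[n] '' ({t} ×ˢ (Set.univ : Set N))) ≤ C * lam ^ n)
    (S : Set (T × N)) (hS : S = ⋂ l : ℕ, F^[l] '' Set.univ)
    (p : T × N) (hpS : p ∈ S) (hpNW : NonWandering F p)
    (t : ℕ → T) (ht0 : t 0 = p.1)
    (htg : ∀ i : ℕ, g (t (i + 1)) = t i)
    (hitin : ∀ i : ℕ, p ∈ F^[i] '' ({t i} ×ˢ (Set.univ : Set N))) :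
    ∀ i : ℕ, NonWandering g (t i) := by
  -- preliminaries
  have hfst : ∀ (n : ℕ) (x : T × N), (F^[n] x).1 = g^[n] x.1 := by
    intro n
    induction n with
    | zero => intro x; simp
    | succ n ih =>
      intro x
      rw [Function.iterate_succ_apply', Function.iterate_succ_apply', hfib, ih]
  have hti : ∀ k : ℕ, g^[k] (t k) = t 0 := by
    intro k
    induction k with
    | zero => simp
    | succ k ih => rw [Function.iterate_succ_apply, htg, ih]
  have hlociter : ∀ k : ℕ, IsLocalHomeomorph (g^[k]) := by
    intro k
    induction k with
    | zero =>
      have := (Homeomorph.refl T).isLocalHomeomorph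
      simpa [Function.iterate_zero] using this
    | succ k ih =>
      rw [Function.iterate_succ]
      exact ih.comp hgcov.isLocalHomeomorph
  intro i U hU
  obtain ⟨ρ, hρ0, hballU⟩ := Metric.mem_nhds_iff.1 hU
  -- the preimage point r of p under F^[i] in the fiber over t i
  obtain ⟨r, hrmem, hrp⟩ := hitin i
  have hr1 : r.1 = t i := hrmem.1
  have hinj : Function.Injective (F^[i]) := hFi.iterate i
  -- continuity of the inverse branch at p
  obtain ⟨δ, hδ0, hδ⟩ : ∃ δ > 0, ∀ x : T × N, dist (F^[i] x) p < δ → dist x.1 (t i) < ρ := by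
    set D : Set (T × N) := {x | ρ ≤ dist x.1 (t i)} with hD
    have hDclosed : IsClosed D :=
      isClosed_le continuous_const (continuous_fst.dist continuous_const)
    have hK : IsCompact (F^[i] '' D) := (hDclosed.isCompact).image (hFc.iterate i)
    have hpK : p ∉ F^[i] '' D := by
      rintro ⟨x, hxD, hx⟩
      have hxr : x = r := hinj (hx.trans hrp.symm)
      rw [hxr] at hxD
      simp only [hD, Set.mem_setOf_eq, hr1, dist_self] at hxD
      linarith
    obtain ⟨δ, hδ0, hball⟩ :=
      Metric.mem_nhds_iff.1 (hK.isClosed.isOpen_compl.mem_nhds hpK)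
    refine ⟨δ, hδ0, fun x hx => ?_⟩
    have : F^[i] x ∉ F^[i] '' D := hball (Metric.mem_ball.2 hx)
    by_contra hcon
    exact this ⟨x, not_lt.1 hcon, rfl⟩
  -- local homeomorphism of g^[i] at t i
  obtain ⟨e, hte, hfe⟩ := hlociter i (t i)
  set A : Set T := e.source ∩ Metric.ball (t i) ρ with hA
  have hAopen : IsOpen A := e.open_source.inter Metric.isOpen_ball
  have hVopen : IsOpen (e '' A) :=
    e.isOpen_image_of_subset_source hAopen Set.inter_subset_left
  have ht0V : p.1 ∈ e '' A := by
    refine ⟨t i, ⟨hte, Metric.mem_ball_self hρ0⟩, ?_⟩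
    rw [← hfe] at *
    rw [hti i, ht0]
  -- choose a tail bound
  obtain ⟨n₀, hn₀⟩ := exists_pow_lt_of_lt_one
    (show (0 : ℝ) < δ / (2 * C) by positivity) hlam1
  have hn₀' : C * lam ^ n₀ < δ / 2 := by
    have h1 : C * lam ^ n₀ < C * (δ / (2 * C)) := (mul_lt_mul_iff_right₀ hC).2 hn₀
    have h2 : C * (δ / (2 * C)) = δ / 2 := by
      field_simp
    linarith
  set m := max (i + 1) n₀ with hm
  set W : Set (T × N) := Metric.ball p (δ / 2) ∩ (fun y : T × N => y.1) ⁻¹' (e '' A) with hWdef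
  have hW : W ∈ nhds p :=
    Filter.inter_mem (Metric.ball_mem_nhds p (by positivity))
      ((hVopen.preimage continuous_fst).mem_nhds ht0V)
  obtain ⟨n, hnm, q, hqW, hqnW⟩ := nonWandering_large_times F hFc p hpNW W hW m
  have hn1 : 1 ≤ n := le_trans (le_trans (Nat.one_le_iff_ne_zero.2 (Nat.succ_ne_zero i))
    (le_max_left (i + 1) n₀)) hnm
  have hnn₀ : n₀ ≤ n := le_trans (le_max_right (i + 1) n₀) hnm
  -- the lift u of q.1
  obtain ⟨u, huA, hue⟩ := hqW.2
  have hu_gi : g^[i] u = q.1 := by rw [hfe]; exact hue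
  have huU : u ∈ U := hballU huA.2
  set x : T × N := (u, Classical.arbitrary N) with hx
  have hx1 : (F^[i] x).1 = q.1 := by rw [hfst]; exact hu_gi
  -- both F^[i] x and q are in the fiber over q.1, so their n-th images are close
  have hmem1 : F^[n] (F^[i] x) ∈ F^[n] '' ({q.1} ×ˢ (Set.univ : Set N)) :=
    ⟨F^[i] x, ⟨hx1, Set.mem_univ _⟩, rfl⟩
  have hmem2 : F^[n] q ∈ F^[n] '' ({q.1} ×ˢ (Set.univ : Set N)) :=
    ⟨q, ⟨rfl, Set.mem_univ _⟩, rfl⟩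
  have hdist1 : dist (F^[n] (F^[i] x)) (F^[n] q) ≤ C * lam ^ n :=
    le_trans (Metric.dist_le_diam_of_mem Metric.isBounded_of_compactSpace hmem1 hmem2)
      (hcontr q.1 n)
  have hlamle : C * lam ^ n ≤ C * lam ^ n₀ := by
    have : lam ^ n ≤ lam ^ n₀ := pow_le_pow_of_le_one hlam0.le hlam1.le hnn₀
    exact (mul_le_mul_iff_right₀ hC).2 this
  have hFq : dist (F^[n] q) p < δ / 2 := Metric.mem_ball.1 hqnW.1
  have hcomm : F^[i] (F^[n] x) = F^[n] (F^[i] x) := by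
    rw [← Function.iterate_add_apply, ← Function.iterate_add_apply, Nat.add_comm]
  have hclose : dist (F^[i] (F^[n] x)) p < δ := by
    rw [hcomm]
    calc dist (F^[n] (F^[i] x)) p
        ≤ dist (F^[n] (F^[i] x)) (F^[n] q) + dist (F^[n] q) p := dist_triangle _ _ _
      _ < (C * lam ^ n₀) + δ / 2 := by
          have := le_trans hdist1 hlamle
          linarith
      _ < δ / 2 + δ / 2 := by linarith
      _ = δ := by ring
  have hfin : dist ((F^[n] x).1) (t i) < ρ := hδ _ hclose
  have hgn : (F^[n] x).1 = g^[n] u := hfst n x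
  refine ⟨n, hn1, g^[n] u, ⟨u, huU, rfl⟩, ?_⟩
  rw [← hgn]
  exact hballU hfin
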